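/- The number of ordered factorizations of n into k factors each at least 2 is bounded above by m^m, where m is the number of prime factors of n counted with multiplicity (summing over all k ≥ 2, with each individual factorization counted once). -/

import Mathlib

namespace Stmt3

/-- Tag each prime factor of each entry with the index of that entry. -/
def pairsAux : ℕ → List ℕ → List (ℕ × ℕ)
  | _, [] => []
  | i, a :: t => (a.primeFactorsList.map fun p => (p, i)) ++ pairsAux (i + 1) t

lemma mem_snd_ge {i : ℕ} {l : List ℕ} {q : ℕ × ℕ} (hq : q ∈ pairsAux i l) : i ≤ q.2 := by
  induction l generalizing i with
  | nil => simp [pairsAux] at hq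
  | cons a t ih =>
    simp only [pairsAux, List.mem_append, List.mem_map] at hq
    rcases hq with ⟨p, _, rfl⟩ | hq
    · exact le_refl i
    · exact le_trans (Nat.le_succ i) (ih hq)

lemma mem_snd_lt {i : ℕ} {l : List ℕ} {q : ℕ × ℕ} (hq : q ∈ pairsAux i l) :
    q.2 < i + l.length := by
  induction l generalizing i with
  | nil => simp [pairsAux] at hq
  | cons a t ih =>
    simp only [pairsAux, List.mem_append, List.mem_map] at hq
    rcases hq with ⟨p, _, rfl⟩ | hq
    · simp
    · have := ih hq
      simpa [Nat.add_comm, Nat.add_assoc, Nat.add_left_comm] using this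

lemma map_fst_pairsAux (i : ℕ) (l : List ℕ) :
    (pairsAux i l).map Prod.fst = (l.map Nat.primeFactorsList).flatten := by
  induction l generalizing i with
  | nil => simp [pairsAux]
  | cons a t ih => simp [pairsAux, ih, List.map_map, Function.comp_def]

lemma filter_pairsAux_head (i : ℕ) (a : ℕ) (t : List ℕ) :
    (pairsAux i (a :: t)).filter (fun q => q.2 = i) =
      a.primeFactorsList.map fun p => (p, i) := by
  rw [pairsAux, List.filter_append]
  have h1 : (a.primeFactorsList.map fun p => (p, i)).filter (fun q => q.2 = i) =
      a.primeFactorsList.map fun p => (p, i) := by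
    apply List.filter_eq_self.2
    intro q hq
    simp only [List.mem_map] at hq
    rcases hq with ⟨p, _, rfl⟩
    simp
  have h2 : (pairsAux (i + 1) t).filter (fun q => q.2 = i) = [] := by
    apply List.filter_eq_nil_iff.2
    intro q hq
    have := mem_snd_ge hq
    simp only [decide_eq_true_eq]
    omega
  rw [h1, h2, List.append_nil]

lemma filter_pairsAux_tail (i : ℕ) (a : ℕ) (t : List ℕ) :
    (pairsAux i (a :: t)).filter (fun q => ¬ q.2 = i) = pairsAux (i + 1) t := by
  rw [pairsAux, List.filter_append]
  have h1 : (a.primeFactorsList.map fun p => (p, i)).filter (fun q => ¬ q.2 = i) = [] := by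
    apply List.filter_eq_nil_iff.2
    intro q hq
    simp only [List.mem_map] at hq
    rcases hq with ⟨p, _, rfl⟩
    simp
  have h2 : (pairsAux (i + 1) t).filter (fun q => ¬ q.2 = i) = pairsAux (i + 1) t := by
    apply List.filter_eq_self.2
    intro q hq
    have := mem_snd_ge hq
    simp only [decide_eq_true_eq]
    omega
  rw [h1, h2, List.nil_append]

lemma primeFactorsList_ne_nil {a : ℕ} (ha : 2 ≤ a) : a.primeFactorsList ≠ [] := by
  intro h
  have := Nat.prod_primeFactorsList (n := a) (by omega)
  rw [h] at this
  simp at this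
  omega

lemma pairsAux_ne_nil {i a : ℕ} {t : List ℕ} (ha : 2 ≤ a) : pairsAux i (a :: t) ≠ [] := by
  rw [pairsAux]
  simp [primeFactorsList_ne_nil ha]

lemma determines : ∀ {l l' : List ℕ} (i : ℕ), (∀ a ∈ l, 2 ≤ a) → (∀ a ∈ l', 2 ≤ a) →
    (pairsAux i l).Perm (pairsAux i l') → l = l' := by
  intro l
  induction l with
  | nil =>
    intro l' i _ hl' hp
    cases l' with
    | nil => rfl
    | cons a t =>
      exfalso
      exact pairsAux_ne_nil (hl' a (by simp)) (List.Perm.eq_nil hp.symm)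
  | cons a t ih =>
    intro l' i hl hl' hp
    cases l' with
    | nil =>
      exfalso
      exact pairsAux_ne_nil (hl a (by simp)) (List.Perm.eq_nil hp)
    | cons a' t' =>
      have ha : 2 ≤ a := hl a (by simp)
      have ha' : 2 ≤ a' := hl' a' (by simp)
      have hhead := (hp.filter (fun q => q.2 = i))
      rw [filter_pairsAux_head, filter_pairsAux_head] at hhead
      have hfst := hhead.map Prod.fst
      simp only [List.map_map] at hfst
      have hfst' : a.primeFactorsList.Perm a'.primeFactorsList := by
        simpa [Function.comp_def] using hfst
      have haa : a = a' := by
        have := hfst'.prod_eq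
        rwa [Nat.prod_primeFactorsList (by omega), Nat.prod_primeFactorsList (by omega)] at this
      have htail := (hp.filter (fun q => ¬ q.2 = i))
      rw [filter_pairsAux_tail, filter_pairsAux_tail] at htail
      have htt : t = t' := ih (i + 1) (fun x hx => hl x (by simp [hx]))
        (fun x hx => hl' x (by simp [hx])) htail
      rw [haa, htt]

lemma zip_fst_snd : ∀ (l : List (ℕ × ℕ)), (l.map Prod.fst).zip (l.map Prod.snd) = l := by
  intro l
  induction l with
  | nil => rfl
  | cons q t ih => simp [ih]

/-- The boolean lexicographic order used for sorting pairs. -/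
def lexb (q r : ℕ × ℕ) : Bool := q.1 < r.1 ∨ (q.1 = r.1 ∧ q.2 ≤ r.2)

lemma lexb_trans (a b c : ℕ × ℕ) (h1 : lexb a b = true) (h2 : lexb b c = true) :
    lexb a c = true := by
  simp only [lexb, decide_eq_true_eq, Bool.decide_or, Bool.or_eq_true,
    Bool.decide_and, Bool.and_eq_true] at *
  omega

lemma lexb_total (a b : ℕ × ℕ) : (lexb a b || lexb b a) = true := by
  simp only [lexb, Bool.or_eq_true, decide_eq_true_eq]
  omega

/-- canonical sorted tagged list -/
def sortedPairs (l : List ℕ) : List (ℕ × ℕ) := (pairsAux 0 l).mergeSort lexb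

lemma sortedPairs_perm (l : List ℕ) : (sortedPairs l).Perm (pairsAux 0 l) :=
  List.mergeSort_perm _ _

lemma map_fst_perm {n : ℕ} (hn : n ≠ 0) {l : List ℕ} (hl : ∀ a ∈ l, 2 ≤ a)
    (hp : l.prod = n) : ((sortedPairs l).map Prod.fst).Perm n.primeFactorsList := by
  have h1 : ((sortedPairs l).map Prod.fst).Perm ((pairsAux 0 l).map Prod.fst) :=
    (sortedPairs_perm l).map _
  rw [map_fst_pairsAux] at h1
  refine h1.trans (Nat.primeFactorsList_unique ?_ ?_)
  · rw [List.prod_flatten]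
    rw [List.map_map]
    have : (List.prod ∘ Nat.primeFactorsList) = fun a => if a = 0 then 1 else a := by
      funext a
      by_cases h : a = 0
      · simp [h]
      · simp [h, Nat.prod_primeFactorsList h]
    rw [this]
    have : l.map (fun a => if a = 0 then 1 else a) = l := by
      conv_rhs => rw [← List.map_id l]
      apply List.map_congr_left
      intro a ha
      have := hl a ha
      simp only [List.map_id, id]
      rw [if_neg (by omega)]
    rw [this, hp]
  · intro p hp'
    simp only [List.mem_flatten, List.mem_map] at hp'
    rcases hp' with ⟨L, ⟨a, _, rfl⟩, hpL⟩
    exact Nat.prime_of_mem_primeFactorsList hpL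

lemma map_fst_eq {n : ℕ} (hn : n ≠ 0) {l : List ℕ} (hl : ∀ a ∈ l, 2 ≤ a)
    (hp : l.prod = n) : (sortedPairs l).map Prod.fst = n.primeFactorsList := by
  apply List.Perm.eq_of_pairwise' (r := (· ≤ ·)) _ (Nat.primeFactorsList_sorted n).pairwise (map_fst_perm hn hl hp)
  have hs : List.Pairwise (fun a b => lexb a b = true) (sortedPairs l) :=
    List.pairwise_mergeSort lexb_trans lexb_total _
  refine List.Pairwise.map Prod.fst ?_ hs
  intro a b h
  simp only [lexb, Bool.or_eq_true, decide_eq_true_eq] at h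
  omega

lemma key {n : ℕ} (hn : n ≠ 0) {l l' : List ℕ} (hl : ∀ a ∈ l, 2 ≤ a)
    (hl' : ∀ a ∈ l', 2 ≤ a) (hp : l.prod = n) (hp' : l'.prod = n)
    (h : (sortedPairs l).map Prod.snd = (sortedPairs l').map Prod.snd) : l = l' := by
  have hS : sortedPairs l = sortedPairs l' := by
    rw [← zip_fst_snd (sortedPairs l), ← zip_fst_snd (sortedPairs l'),
      map_fst_eq hn hl hp, map_fst_eq hn hl' hp', h]
  exact determines 0 hl hl'
    (((sortedPairs_perm l).symm.trans (hS ▸ sortedPairs_perm l')))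

lemma length_sortedPairs {n : ℕ} (hn : n ≠ 0) {l : List ℕ} (hl : ∀ a ∈ l, 2 ≤ a)
    (hp : l.prod = n) : (sortedPairs l).length = n.primeFactorsList.length := by
  rw [← map_fst_eq hn hl hp, List.length_map]

lemma length_le {n : ℕ} (hn : n ≠ 0) {l : List ℕ} (hl : ∀ a ∈ l, 2 ≤ a)
    (hp : l.prod = n) : l.length ≤ n.primeFactorsList.length := by
  rw [← length_sortedPairs hn hl hp, (sortedPairs_perm l).length_eq]
  clear hp
  have : ∀ (i : ℕ), l.length ≤ (pairsAux i l).length := by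
    intro i
    induction l generalizing i with
    | nil => simp [pairsAux]
    | cons a t ih =>
      rw [pairsAux]
      simp only [List.length_append, List.length_map, List.length_cons]
      have h1 : 1 ≤ a.primeFactorsList.length := by
        rcases List.length_pos_iff.2 (primeFactorsList_ne_nil (hl a (by simp))) with h
        omega
      have := ih (fun x hx => hl x (by simp [hx])) (i + 1)
      omega
  exact this 0

lemma snd_lt {n : ℕ} (hn : n ≠ 0) {l : List ℕ} (hl : ∀ a ∈ l, 2 ≤ a)
    (hp : l.prod = n) {q : ℕ × ℕ} (hq : q ∈ sortedPairs l) :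
    q.2 < n.primeFactorsList.length := by
  have hq' : q ∈ pairsAux 0 l := (sortedPairs_perm l).mem_iff.1 hq
  have := mem_snd_lt hq'
  have := length_le hn hl hp
  omega

end Stmt3

/-- The number of ordered factorizations of `n` into `k ≥ 2` factors each `≥ 2`
(summed over all `k ≥ 2`) is at most `m^m`, where `m = Ω(n)` is the number of prime
factors of `n` counted with multiplicity. -/
theorem stmt_3 (n : ℕ) (hn : 2 ≤ n) :
    {l : List ℕ | 2 ≤ l.length ∧ (∀ m ∈ l, 2 ≤ m) ∧ l.prod = n}.ncard
      ≤ n.primeFactorsList.length ^ n.primeFactorsList.length := by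
  have hn0 : n ≠ 0 := by omega
  set m := n.primeFactorsList.length with hm
  set S := {l : List ℕ | 2 ≤ l.length ∧ (∀ m ∈ l, 2 ≤ m) ∧ l.prod = n} with hS
  have hF : ∀ (l : S), ∀ j : Fin m, ((Stmt3.sortedPairs l.1).map Prod.snd).getD j.1 0 < m := by
    rintro ⟨l, h1, h2, h3⟩ j
    have hlen : ((Stmt3.sortedPairs l).map Prod.snd).length = m := by
      rw [List.length_map, Stmt3.length_sortedPairs hn0 h2 h3]
    have hj : j.1 < ((Stmt3.sortedPairs l).map Prod.snd).length := by rw [hlen]; exact j.2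
    rw [List.getD_eq_getElem _ _ hj]
    have hmem : ((Stmt3.sortedPairs l).map Prod.snd)[j.1] ∈
        (Stmt3.sortedPairs l).map Prod.snd := List.getElem_mem _
    simp only [List.mem_map] at hmem
    rcases hmem with ⟨q, hq, hq2⟩
    rw [← hq2]
    exact Stmt3.snd_lt hn0 h2 h3 hq
  set F : S → (Fin m → Fin m) :=
    fun l j => ⟨((Stmt3.sortedPairs l.1).map Prod.snd).getD j.1 0, hF l j⟩ with hFdef
  have hinj : Function.Injective F := by
    rintro ⟨l, h1, h2, h3⟩ ⟨l', h1', h2', h3'⟩ heq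
    have hlen : ((Stmt3.sortedPairs l).map Prod.snd).length = m := by
      rw [List.length_map, Stmt3.length_sortedPairs hn0 h2 h3]
    have hlen' : ((Stmt3.sortedPairs l').map Prod.snd).length = m := by
      rw [List.length_map, Stmt3.length_sortedPairs hn0 h2' h3']
    have hsnd : (Stmt3.sortedPairs l).map Prod.snd = (Stmt3.sortedPairs l').map Prod.snd := by
      apply List.ext_getElem (by rw [hlen, hlen'])
      intro i hi hi'
      have hiM : i < m := by rw [← hlen]; exact hi
      have := congrFun heq ⟨i, hiM⟩
      have h2eq := congrArg Fin.val this
      simp only [hFdef] at h2eq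
      rwa [List.getD_eq_getElem _ _ hi, List.getD_eq_getElem _ _ hi'] at h2eq
    have : l = l' := Stmt3.key hn0 h2 h2' h3 h3' hsnd
    exact Subtype.ext this
  calc S.ncard = Nat.card S := rfl
    _ ≤ Nat.card (Fin m → Fin m) := Nat.card_le_card_of_injective F hinj
    _ = m ^ m := by simp [Nat.card_eq_fintype_card]
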